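/- Let c = 1 < b, d ≥ 0, and let {ξ_k}_{k≥1} be nonnegative reals with ξ_{k+1} ≤ (1 − 1/(k+b)) ξ_k + d/((k+b)(k+b−1)) for all k ≥ 1. Then for every k ≥ 1, ξ_{k+1} ≤ ((1+b)ξ₁ + 3d)/(k+b+1) + 3d · log(k)/(k+b+1). -/

import Mathlib

theorem stmt12 (b d : ℝ) (hb : 1 < b) (hd : 0 ≤ d)
    (ξ : ℕ → ℝ) (hξ : ∀ k, 1 ≤ k → 0 ≤ ξ k)
    (hrec : ∀ k, 1 ≤ k →
      ξ (k+1) ≤ (1 - 1/((k:ℝ)+b)) * ξ k + d/(((k:ℝ)+b)*((k:ℝ)+b-1))) :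
    ∀ k, 1 ≤ k →
      ξ (k+1) ≤ ((1+b)*ξ 1 + 3*d)/((k:ℝ)+b+1) + 3*d*Real.log k/((k:ℝ)+b+1) := by
  have hb0 : (0:ℝ) < b := lt_trans one_pos hb
  -- one-step estimate with denominators cleared
  have step : ∀ k : ℕ, 1 ≤ k →
      ((k:ℝ)+b) * ξ (k+1) ≤ ((k:ℝ)+b-1) * ξ k + d/((k:ℝ)+b-1) := by
    intro k hk
    have hk1 : (1:ℝ) ≤ (k:ℝ) := by exact_mod_cast hk
    have h1 : (0:ℝ) < (k:ℝ)+b := by linarith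
    have h2 : (0:ℝ) < (k:ℝ)+b-1 := by linarith
    have h3 := mul_le_mul_of_nonneg_left (hrec k hk) h1.le
    calc ((k:ℝ)+b) * ξ (k+1)
        ≤ ((k:ℝ)+b) * ((1 - 1/((k:ℝ)+b)) * ξ k + d/(((k:ℝ)+b)*((k:ℝ)+b-1))) := h3
      _ = ((k:ℝ)+b-1) * ξ k + d/((k:ℝ)+b-1) := by
          field_simp
  have key : ∀ k : ℕ, 1 ≤ k →
      ((k:ℝ)+b) * ξ (k+1) ≤ b * ξ 1 + d * (1 + Real.log k) := by
    intro k hk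
    induction k, hk using Nat.le_induction with
    | base =>
      have h := step 1 le_rfl
      have hdb : d / ((1:ℝ)+b-1) ≤ d := by
        rw [show (1:ℝ)+b-1 = b by ring]
        exact div_le_self hd hb.le
      push_cast at h ⊢
      rw [Real.log_one]
      nlinarith
    | succ k hk ih =>
      have hk1 : (1:ℝ) ≤ (k:ℝ) := by exact_mod_cast hk
      have hkpos : (0:ℝ) < (k:ℝ) := by linarith
      have h := step (k+1) (by omega)
      push_cast at h ⊢
      have hlog : Real.log k + 1/((k:ℝ)+1) ≤ Real.log ((k:ℝ)+1) := by
        have hx : (0:ℝ) < (k:ℝ)/((k:ℝ)+1) := by positivity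
        have h1 := Real.log_le_sub_one_of_pos hx
        rw [Real.log_div (by positivity) (by positivity)] at h1
        have : (k:ℝ)/((k:ℝ)+1) - 1 = -(1/((k:ℝ)+1)) := by
          field_simp
          ring
        linarith [this ▸ h1]
      have hdiv : d/((k:ℝ)+1+b-1) ≤ d * (1/((k:ℝ)+1)) := by
        rw [mul_one_div]
        apply div_le_div_of_nonneg_left hd (by linarith) (by linarith)
      have hdl : d * (Real.log k + 1/((k:ℝ)+1)) ≤ d * Real.log ((k:ℝ)+1) :=
        mul_le_mul_of_nonneg_left hlog hd
      have : ((k:ℝ)+1+b-1) * ξ (k+1) ≤ b * ξ 1 + d * (1 + Real.log k) := by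
        have : (k:ℝ)+1+b-1 = (k:ℝ)+b := by ring
        rw [this]; exact ih
      nlinarith
  intro k hk
  have hk1 : (1:ℝ) ≤ (k:ℝ) := by exact_mod_cast hk
  have h1 : (0:ℝ) < (k:ℝ)+b := by linarith
  have h2 : (0:ℝ) < (k:ℝ)+b+1 := by linarith
  have hL : 0 ≤ Real.log k := Real.log_nonneg hk1
  have hx1 : 0 ≤ ξ 1 := hξ 1 le_rfl
  have H := key k hk
  have hle : ξ (k+1) ≤ (b * ξ 1 + d * (1 + Real.log k)) / ((k:ℝ)+b) :=
    (le_div_iff₀ h1).mpr (by linarith [H])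
  have hfin : (b * ξ 1 + d * (1 + Real.log k)) / ((k:ℝ)+b)
      ≤ (((1+b)*ξ 1 + 3*d) + 3*d*Real.log k) / ((k:ℝ)+b+1) := by
    rw [div_le_div_iff₀ h1 h2]
    have hk0 : (0:ℝ) ≤ (k:ℝ) := by linarith
    nlinarith [mul_nonneg hd hL, mul_nonneg (mul_nonneg hd hL) hk0,
      mul_nonneg hx1 hk0, mul_nonneg hd hk0]
  calc ξ (k+1) ≤ _ := hle
    _ ≤ (((1+b)*ξ 1 + 3*d) + 3*d*Real.log k) / ((k:ℝ)+b+1) := hfin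
    _ = ((1+b)*ξ 1 + 3*d)/((k:ℝ)+b+1) + 3*d*Real.log k/((k:ℝ)+b+1) := by
        rw [add_div]
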